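/- arXiv:math/0511123 — 2 statements merged into one kernel-verified Lean document; each statement's English description precedes it below -/
import Mathlib

section
/- Let G be a finite group and ω a normalized 3-cocycle on G with values in kˣ, where k is an algebraically closed field of characteristic zero. Then there exists a normalized 3-cocycle ω̃ cohomologous to ω such that ω̃(g, g⁻¹, g)^(exp G) = 1 for all g ∈ G. -/
/-- The coboundary of a 2-cochain `f` (trivial action). -/
def d₂ {G M : Type*} [Group G] [CommGroup M] (f : G → G → M) : G → G → G → M :=
  fun x y z => f y z * (f (x * y) z)⁻¹ * f x (y * z) * (f x y)⁻¹

/-- Multiplicative 3-cocycle condition (trivial action). -/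
def IsMulCocycle₃ {G M : Type*} [Group G] [CommGroup M] (ω : G → G → G → M) : Prop :=
  ∀ x y z w : G, ω x y z * ω x (y * z) w * ω y z w = ω (x * y) z w * ω x y (z * w)

/-- A 3-cochain is normalized if it is trivial whenever an argument is the identity. -/
def IsNormalized₃ {G M : Type*} [Group G] [CommGroup M] (ω : G → G → G → M) : Prop :=
  ∀ x y : G, ω 1 x y = 1 ∧ ω x 1 y = 1 ∧ ω x y 1 = 1

/-- A 2-cochain is normalized if it is trivial whenever an argument is the identity. -/
def IsNormalized₂ {G M : Type*} [Group G] [CommGroup M] (f : G → G → M) : Prop :=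
  (∀ x : G, f x 1 = 1) ∧ (∀ x : G, f 1 x = 1)

/-- `ω` is a 3-coboundary (trivial action). -/
def IsMulCoboundary₃ {G M : Type*} [Group G] [CommGroup M] (ω : G → G → G → M) : Prop :=
  ∃ f : G → G → M, ω = d₂ f

/-- `π_{n,ω}(g) = ω(g,g^{n-1},g) ⋯ ω(g,g,g)`. -/
def piPow {G M : Type*} [Group G] [CommGroup M] (ω : G → G → G → M) (n : ℕ) (g : G) : M :=
  ∏ j ∈ Finset.Ico 1 n, ω g (g ^ j) g


lemma d2_cocycle {G k : Type*} [Group G] [Field k] (f : G → G → kˣ) :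
    IsMulCocycle₃ (d₂ f) := by
  intro x y z w
  rw [Units.ext_iff]
  push_cast [d₂, mul_assoc]
  field_simp

lemma mul3 {M : Type*} [CommMonoid M] (a b c d e g : M) :
    (a * d) * (b * e) * (c * g) = (a * b * c) * (d * e * g) := by
  simp [mul_assoc, mul_comm, mul_left_comm]

lemma combine3 {M : Type*} [CommMonoid M] {a b c d e g A B D E : M}
    (h1 : a * b * c = A * B) (h2 : d * e * g = D * E) :
    (a * d) * (b * e) * (c * g) = (A * D) * (B * E) := by
  rw [mul3, h1, h2, mul_mul_mul_comm]


/-- There is a normalized 3-cocycle `ω̃` cohomologous to `ω` with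
`ω̃(g,g⁻¹,g)^(exp G) = 1` for all `g ∈ G`. -/
theorem stmt_1 {G k : Type*} [Group G] [Finite G] [Field k] [CharZero k] [IsAlgClosed k]
    (ω : G → G → G → kˣ) (hc : IsMulCocycle₃ ω) (hn : IsNormalized₃ ω) :
    ∃ ω' : G → G → G → kˣ, IsMulCocycle₃ ω' ∧ IsNormalized₃ ω' ∧
      (∃ f : G → G → kˣ, IsNormalized₂ f ∧
        ∀ x y z : G, ω' x y z = ω x y z * d₂ f x y z) ∧
      ∀ g : G, (ω' g g⁻¹ g) ^ Monoid.exponent G = 1 := by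
  classical
  -- key identity: ω(g,g⁻¹,g) ω(g⁻¹,g,g⁻¹) = 1
  have key : ∀ g : G, ω g g⁻¹ g * ω g⁻¹ g g⁻¹ = 1 := by
    intro g
    have h := hc g g⁻¹ g g⁻¹
    simpa [inv_mul_cancel, mul_inv_cancel, (hn g g⁻¹).1, (hn g g⁻¹).2.1,
      (hn g g⁻¹).2.2] using h
  set r : G → G → Prop := WellOrderingRel with hrdef
  have hirr : ∀ a : G, ¬ r a a := fun a h => (irrefl_of r a) h
  have hasymm : ∀ a b : G, r a b → ¬ r b a := fun a b hab hba =>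
    hirr a (trans_of r hab hba)
  have htri : ∀ a b : G, a ≠ b → r a b ∨ r b a := by
    intro a b hab
    rcases trichotomous_of r a b with h | h | h
    · exact Or.inl h
    · exact absurd h hab
    · exact Or.inr h
  set f : G → G → kˣ := fun x y =>
    if x = y⁻¹ ∧ r y x then (ω y x y)⁻¹ else 1 with hfdef
  have hfR : ∀ x : G, f x 1 = 1 := by
    intro x
    refine if_neg ?_
    rintro ⟨h1, h2⟩
    rw [inv_one] at h1
    subst h1
    exact hirr 1 h2
  have hfL : ∀ x : G, f 1 x = 1 := by
    intro x
    refine if_neg ?_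
    rintro ⟨h1, h2⟩
    have : x = 1 := by rw [← inv_inv x, ← h1, inv_one]
    subst this
    exact hirr 1 h2
  refine ⟨fun x y z => ω x y z * d₂ f x y z, ?_, ?_, ⟨f, ⟨hfR, hfL⟩, fun _ _ _ => rfl⟩, ?_⟩
  · -- cocycle
    intro x y z w
    exact combine3 (hc x y z w) (d2_cocycle f x y z w)
  · -- normalized
    intro x y
    refine ⟨?_, ?_, ?_⟩
    · simp [d₂, (hn x y).1, hfL, hfR]
    · simp [d₂, (hn x y).2.1, hfL, hfR]
    · simp [d₂, (hn x y).2.2, hfL, hfR]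
  · -- the power condition
    intro g
    by_cases hg : g⁻¹ = g
    · rw [hg]
      have hgg : g * g = 1 := by nth_rewrite 1 [← hg]; exact inv_mul_cancel g
      have hd : d₂ f g g g = 1 := by
        simp [d₂, hgg, hfL, hfR]
      by_cases hg1 : g = 1
      · subst hg1
        simp [hd, (hn 1 1).1]
      · have h2 : (ω g g g * d₂ f g g g) ^ 2 = 1 := by
          have := key g
          rw [hg] at this
          rw [hd, mul_one, sq, this]
        have hord : orderOf g = 2 := orderOf_eq_prime (by rw [sq]; exact hgg) hg1
        have hdvd : 2 ∣ Monoid.exponent G := hord ▸ Monoid.order_dvd_exponent g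
        obtain ⟨m, hm⟩ := hdvd
        simp only
        rw [hm, pow_mul, h2, one_pow]
    · have hone : ω g g⁻¹ g * d₂ f g g⁻¹ g = 1 := by
        have hsimp : d₂ f g g⁻¹ g = f g⁻¹ g * (f g g⁻¹)⁻¹ := by
          simp [d₂, mul_inv_cancel, inv_mul_cancel, hfL, hfR, mul_comm, mul_left_comm]
        by_cases hr : r g g⁻¹
        · have h1 : f g⁻¹ g = (ω g g⁻¹ g)⁻¹ := if_pos ⟨rfl, hr⟩
          have h2 : f g g⁻¹ = 1 := by
            refine if_neg ?_
            rintro ⟨-, h⟩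
            exact hasymm g g⁻¹ hr h
          rw [hsimp, h1, h2]
          simp
        · have hr' : r g⁻¹ g := by
            rcases htri g g⁻¹ (fun h => hg h.symm) with h | h
            · exact absurd h hr
            · exact h
          have h1 : f g⁻¹ g = 1 := by
            refine if_neg ?_
            rintro ⟨-, h⟩
            exact hasymm g⁻¹ g hr' h
          have h2 : f g g⁻¹ = (ω g⁻¹ g g⁻¹)⁻¹ := if_pos ⟨(inv_inv g).symm, hr'⟩
          rw [hsimp, h1, h2, inv_inv, one_mul]
          exact key g
      simp only
      rw [hone, one_pow]
end

section
/- Let G be a finite group, ω a normalized 3-cocycle on G with values in kˣ, g ∈ G, and n a positive integer such that the order of g divides n. Define π_{n,ω}(g) = ∏_{j=1}^{n−1} ω(g, gʲ, g). Then π_{n,ω}(g) = π_{|g|, ω̃}(g), where ω̃ is the restriction of ω^(n/|g|) to the cyclic subgroup generated by g. -/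
private lemma prod_range_mul_period {M : Type*} [CommMonoid M] (f : ℕ → M) (d : ℕ)
    (hf : ∀ k i, f (k * d + i) = f i) (m : ℕ) :
    ∏ i ∈ Finset.range (m * d), f i = (∏ i ∈ Finset.range d, f i) ^ m := by
  induction m with
  | zero => simp
  | succ m ih =>
    rw [Nat.succ_mul, Finset.prod_range_add, ih, pow_succ]
    congr 1
    exact Finset.prod_congr rfl fun i _ => hf m i

/-- If `|g| ∣ n` then `π_(n,ω)(g) = π_(|g|,ω̃)(g)` where `ω̃` is the
restriction of `ω^(n/|g|)` to the cyclic subgroup generated by `g`. -/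
theorem stmt_4 {G k : Type*} [Group G] [Finite G] [Field k] [CharZero k] [IsAlgClosed k]
    (ω : G → G → G → kˣ) (hc : IsMulCocycle₃ ω) (hn : IsNormalized₃ ω)
    (g : G) (n : ℕ) (hpos : 0 < n) (hdvd : orderOf g ∣ n) :
    piPow ω n g =
      piPow (fun x y z : Subgroup.zpowers g => ω x y z ^ (n / orderOf g)) (orderOf g)
        ⟨g, Subgroup.mem_zpowers g⟩ := by
  set d := orderOf g with hd
  have hdpos : 0 < d := orderOf_pos g
  set m := n / d with hm
  have hnm : n = m * d := by rw [hm, Nat.div_mul_cancel hdvd]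
  have hzero : ω g (g ^ 0) g = 1 := by simpa using (hn g g).2.1
  have hrange : ∀ N : ℕ, ∏ j ∈ Finset.Ico 1 N, ω g (g ^ j) g
      = ∏ j ∈ Finset.range N, ω g (g ^ j) g := by
    intro N
    rcases Nat.eq_zero_or_pos N with h | h
    · simp [h]
    · rw [Finset.range_eq_Ico, Finset.prod_eq_prod_Ico_succ_bot h, hzero, one_mul]
  have hper : ∀ k i : ℕ, ω g (g ^ (k * d + i)) g = ω g (g ^ i) g := by
    intro k i
    have : g ^ (k * d) = 1 := by
      rw [mul_comm, pow_mul, hd, pow_orderOf_eq_one, one_pow]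
    rw [pow_add, this, one_mul]
  have hcoe : ∀ j : ℕ,
      ((⟨g, Subgroup.mem_zpowers g⟩ : Subgroup.zpowers g) ^ j : Subgroup.zpowers g)
        = (⟨g ^ j, Subgroup.pow_mem _ (Subgroup.mem_zpowers g) j⟩ : Subgroup.zpowers g) := by
    intro j; ext; simp
  calc piPow ω n g = ∏ j ∈ Finset.range (m * d), ω g (g ^ j) g := by
        rw [piPow, hrange, hnm]
    _ = (∏ j ∈ Finset.range d, ω g (g ^ j) g) ^ m :=
        prod_range_mul_period _ d hper m
    _ = (∏ j ∈ Finset.Ico 1 d, ω g (g ^ j) g) ^ m := by rw [hrange]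
    _ = ∏ j ∈ Finset.Ico 1 d, (ω g (g ^ j) g) ^ m := by rw [Finset.prod_pow]
    _ = _ := by
        rw [piPow]
        refine Finset.prod_congr rfl fun j _ => ?_
        rw [hcoe j]
end
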